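/- arXiv:2403.17669 — 3 statements merged into one kernel-verified Lean document; each statement's English description precedes it below -/
import Mathlib

section
/- Let d ≥ 1 and k ≥ 2 be integers and fix 1 ≤ i < j ≤ k. There exists a constant C = C(k, d) such that for every T ≥ 0 and every x ∈ (ℤ^d)^k, Σ_{w ∈ (ℤ^d)^k} 1{‖w_i − w_j‖ = 1} (T + ‖x − w‖ + 1)^{−((k−1)d + 1)} ≤ C / (T + 1). -/
open scoped Classical
open scoped ENNReal

noncomputable section

namespace SSEPPaper

/-- Configurations of `k` labelled particles on `ℤ^d`. -/
abbrev Conf (d k : ℕ) := Fin k → Fin d → ℤ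

/-- Euclidean norm of an integer vector in `ℤ^d`. -/
def vnorm {d : ℕ} (v : Fin d → ℤ) : ℝ := Real.sqrt (∑ j, ((v j : ℝ)) ^ 2)

/-- Euclidean norm on `(ℝ^d)^k` of an integer configuration. -/
def cnorm {d k : ℕ} (x : Conf d k) : ℝ := Real.sqrt (∑ i, ∑ j, ((x i j : ℝ)) ^ 2)

/-- The set `𝕊^k` of configurations with pairwise distinct particle positions. -/
def SSet (d k : ℕ) : Set (Conf d k) := {x | ∀ i j : Fin k, i ≠ j → x i ≠ x j}

/-- Swap of the coordinates `i` and `j` of a configuration, i.e. `σ^{i,j}x`. -/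
def cswap {d k : ℕ} (i j : Fin k) (x : Conf d k) : Conf d k := x ∘ Equiv.swap i j

/-- `δ^{i,j}w`: the configuration which agrees with `w` except that its `j`-th coordinate
is replaced by `w i`. -/
def cdelta {d k : ℕ} (i j : Fin k) (w : Conf d k) : Conf d k := Function.update w j (w i)

/-- Kronecker delta function at `y`. -/
def deltaFn {α : Type*} (y : α) : α → ℝ := fun x => if x = y then 1 else 0

/-- Generator of the labelled exclusion process, extended to all of `(ℤ^d)^k`. -/
def Lexc {d k : ℕ} (f : Conf d k → ℝ) : Conf d k → ℝ := fun x =>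
  (∑' y : Conf d k, if cnorm (y - x) = 1 ∧ y ∈ SSet d k then f y - f x else 0) +
    ∑ i : Fin k, ∑ j : Fin k,
      if i < j ∧ vnorm (x i - x j) = 1 ∧ x ∈ SSet d k then f (cswap i j x) - f x else 0

/-- Generator of `k` independent simple random walks on `ℤ^d`. -/
def Lrw {d k : ℕ} (f : Conf d k → ℝ) : Conf d k → ℝ := fun x =>
  ∑' z : Conf d k, if cnorm (z - x) = 1 then f z - f x else 0

/-- Generator (discrete Laplacian) of a single simple random walk on `ℤ^d`. -/
def Lap {d : ℕ} (f : (Fin d → ℤ) → ℝ) : (Fin d → ℤ) → ℝ := fun x =>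
  ∑' y : Fin d → ℤ, if vnorm (y - x) = 1 then f y - f x else 0

/-- Transition probabilities `p_t^ℓ(x,y) = (e^{tL^ℓ} δ_y)(x)` of the labelled exclusion
process, given by the exponential power series of the generator. -/
def ptl {d k : ℕ} (t : ℝ) (x y : Conf d k) : ℝ :=
  ∑' n : ℕ, t ^ n / n.factorial * ((Lexc (d := d) (k := k))^[n] (deltaFn y)) x

/-- Transition probabilities `p_t^{rw}(x,y) = (e^{tL^{rw}} δ_y)(x)` of `k` independent
simple random walks on `ℤ^d`. -/
def ptrw {d k : ℕ} (t : ℝ) (x y : Conf d k) : ℝ :=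
  ∑' n : ℕ, t ^ n / n.factorial * ((Lrw (d := d) (k := k))^[n] (deltaFn y)) x

/-- Transition probabilities `p_t(x,y) = (e^{tΔ} δ_y)(x)` of a single continuous-time
simple random walk on `ℤ^d`. -/
def pt1 {d : ℕ} (t : ℝ) (x y : Fin d → ℤ) : ℝ :=
  ∑' n : ℕ, t ^ n / n.factorial * ((Lap (d := d))^[n] (deltaFn y)) x

/-- The configuration `e₁₁ = ((1,0,…,0),(0,…,0),…,(0,…,0))`. -/
def e11 (d k : ℕ) : Conf d k := fun i j => if i.val = 0 ∧ j.val = 0 then 1 else 0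



private lemma sumNat (T : ℝ) (hT : 0 ≤ T) :
    Summable (fun n : ℕ => ((T + n + 1) ^ 2)⁻¹) ∧
      ∑' n : ℕ, ((T + n + 1) ^ 2)⁻¹ ≤ 2 / (T + 1) := by
  set g : ℕ → ℝ := fun n => 2 / (T + n + 1) with hg
  set b : ℕ → ℝ := fun n => g n - g (n + 1) with hb
  have hgpos : ∀ n : ℕ, (0:ℝ) < T + n + 1 := fun n => by positivity
  have hgnn : ∀ n : ℕ, 0 ≤ g n := fun n => by positivity
  have hbnn : ∀ n : ℕ, 0 ≤ b n := by
    intro n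
    have h1 : g (n+1) ≤ g n := by
      rw [hg]; dsimp only
      gcongr <;> omega
    simp only [hb]; linarith
  have hrange : ∀ N : ℕ, ∑ i ∈ Finset.range N, b i ≤ 2 / (T + 1) := by
    intro N
    rw [hb, Finset.sum_range_sub' g N]
    have h0 : g 0 = 2 / (T + 1) := by simp [hg]
    have h1 : 0 ≤ g N := hgnn N
    linarith
  have hbsum : Summable b := summable_of_sum_range_le hbnn hrange
  have hfb : ∀ n : ℕ, ((T + n + 1) ^ 2)⁻¹ ≤ b n := by
    intro n
    have h1 := hgpos n
    have h2 : (0:ℝ) < T + n + 2 := by positivity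
    have heq : b n = 2 / ((T + n + 1) * (T + n + 2)) := by
      have h1' : (T+(n:ℝ)+1) ≠ 0 := ne_of_gt h1
      have h2' : (T+(n:ℝ)+2) ≠ 0 := ne_of_gt h2
      simp only [hb, hg]; push_cast; field_simp; ring
    rw [heq, inv_eq_one_div, div_le_div_iff₀ (by positivity) (by positivity)]
    nlinarith [Nat.cast_nonneg (α := ℝ) n]
  have hfnn : ∀ n : ℕ, (0:ℝ) ≤ ((T + n + 1) ^ 2)⁻¹ := fun n => by positivity
  have hfs : Summable (fun n : ℕ => ((T + n + 1) ^ 2)⁻¹) :=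
    Summable.of_nonneg_of_le hfnn hfb hbsum
  refine ⟨hfs, ?_⟩
  calc ∑' n : ℕ, ((T + n + 1) ^ 2)⁻¹ ≤ ∑' n, b n := Summable.tsum_le_tsum hfb hfs hbsum
    _ ≤ 2 / (T + 1) := Summable.tsum_le_of_sum_range_le hbsum hrange

private lemma sumNatE (T : ℝ) (hT : 0 ≤ T) :
    ∑' n : ℕ, ENNReal.ofReal (((T + n + 1) ^ 2)⁻¹) ≤ ENNReal.ofReal (2 / (T + 1)) := by
  obtain ⟨hs, hle⟩ := sumNat T hT
  rw [← ENNReal.ofReal_tsum_of_nonneg (fun n => by positivity) hs]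
  exact ENNReal.ofReal_le_ofReal hle

private lemma sumZE (T : ℝ) (hT : 0 ≤ T) :
    ∑' z : ℤ, ENNReal.ofReal (((T + z.natAbs + 1) ^ 2)⁻¹) ≤ ENNReal.ofReal (4 / (T + 1)) := by
  classical
  set g : ℤ → ℝ≥0∞ := fun z => ENNReal.ofReal (((T + z.natAbs + 1) ^ 2)⁻¹) with hg
  have hsplit : ∀ z : ℤ, g z = (if 0 ≤ z then g z else 0) + (if z < 0 then g z else 0) := by
    intro z; rcases le_or_gt 0 z with h | h
    · simp [h, not_lt.2 h]
    · simp [h, not_le.2 h]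
  have hposPart : (∑' z : ℤ, if 0 ≤ z then g z else 0)
      = ∑' n : ℕ, ENNReal.ofReal (((T + n + 1) ^ 2)⁻¹) := by
    rw [← Function.Injective.tsum_eq (g := fun n : ℕ => (n : ℤ))
      (f := fun z : ℤ => if 0 ≤ z then g z else 0) (fun a b h => by have h' : (a:ℤ) = b := h; exact_mod_cast h') ?_]
    · apply tsum_congr; intro n
      have h1 : (0:ℤ) ≤ (n:ℤ) := Int.natCast_nonneg n
      have h2 : ((n:ℤ)).natAbs = n := Int.natAbs_natCast n
      simp [hg, h1, h2]
    · intro z hz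
      simp only [Function.mem_support, ne_eq, ite_eq_right_iff, not_forall] at hz
      obtain ⟨h0, -⟩ := hz
      exact ⟨z.toNat, Int.toNat_of_nonneg h0⟩
  have hnegPart : (∑' z : ℤ, if z < 0 then g z else 0)
      = ∑' n : ℕ, ENNReal.ofReal (((T + (n+1) + 1) ^ 2)⁻¹) := by
    rw [← Function.Injective.tsum_eq (g := fun n : ℕ => (-(n+1) : ℤ))
      (f := fun z : ℤ => if z < 0 then g z else 0) (fun a b h => by have h' : -((a:ℤ)+1) = -((b:ℤ)+1) := h; omega) ?_]
    · apply tsum_congr; intro n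
      have h1 : (-((n:ℤ)+1)) < 0 := by omega
      have h2 : (-((n:ℤ)+1)).natAbs = n + 1 := by omega
      simp only [hg, if_pos h1, h2]
      push_cast
      ring_nf
    · intro z hz
      simp only [Function.mem_support, ne_eq, ite_eq_right_iff, not_forall] at hz
      obtain ⟨h0, -⟩ := hz
      refine ⟨(-(z+1)).toNat, ?_⟩
      have h1 : (0:ℤ) ≤ -(z+1) := by omega
      have h2 : (((-(z+1)).toNat : ℤ)) = -(z+1) := Int.toNat_of_nonneg h1
      show -(((-(z+1)).toNat : ℤ) + 1) = z
      omega
  calc ∑' z, g z = ∑' z, ((if 0 ≤ z then g z else 0) + (if z < 0 then g z else 0)) :=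
        tsum_congr hsplit
    _ = (∑' z, if 0 ≤ z then g z else 0) + (∑' z, if z < 0 then g z else 0) := ENNReal.tsum_add
    _ ≤ ENNReal.ofReal (2/(T+1)) + ENNReal.ofReal (2/(T+1)) := by
        apply add_le_add
        · rw [hposPart]; exact sumNatE T hT
        · rw [hnegPart]
          refine le_trans (ENNReal.tsum_le_tsum fun n => ?_) (sumNatE T hT)
          apply ENNReal.ofReal_le_ofReal
          apply inv_anti₀ (by positivity)
          nlinarith [hT, Nat.cast_nonneg (α := ℝ) n]
    _ = ENNReal.ofReal (4/(T+1)) := by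
        rw [← ENNReal.ofReal_add (by positivity) (by positivity)]
        congr 1; ring



private lemma boxCount {κ : Type} [Fintype κ] (a : κ → ℤ) (n : ℕ) :
    ∑' z : κ → ℤ, (if ∀ q, (z q - a q).natAbs ≤ n then (1:ℝ≥0∞) else 0)
      = ((2 * n + 1) ^ Fintype.card κ : ℕ) := by
  classical
  set B := Fintype.piFinset (fun q : κ => Finset.Icc (a q - n) (a q + n)) with hB
  have hmem : ∀ z : κ → ℤ, (∀ q, (z q - a q).natAbs ≤ n) ↔ z ∈ B := by
    intro z
    rw [hB, Fintype.mem_piFinset]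
    apply forall_congr'
    intro q
    rw [Finset.mem_Icc]
    omega
  rw [tsum_eq_sum (s := B) (fun z hz => if_neg (fun h => hz ((hmem z).1 h)))]
  have hone : ∀ z ∈ B, (if ∀ q, (z q - a q).natAbs ≤ n then (1:ℝ≥0∞) else 0) = 1 :=
    fun z hz => if_pos ((hmem z).2 hz)
  rw [Finset.sum_congr rfl hone, Finset.sum_const, nsmul_eq_mul, mul_one]
  have hcardB : B.card = (2 * n + 1) ^ Fintype.card κ := by
    rw [hB, Fintype.card_piFinset]
    have hcard : ∀ q : κ, (Finset.Icc (a q - n) (a q + n)).card = 2*n+1 := by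
      intro q; rw [Int.card_Icc]; omega
    rw [Finset.prod_congr rfl (fun q _ => hcard q), Finset.prod_const, Finset.card_univ]
  rw [hcardB]

private lemma lemA {ι : Type} [Fintype ι] [Nonempty ι] (c : ι → ℤ) (T : ℝ) (hT : 0 ≤ T) :
    ∑' u : ι → ℤ, ENNReal.ofReal
        (((T + ((Finset.univ.sup fun p => (u p - c p).natAbs : ℕ) : ℝ) + 1)
          ^ (Fintype.card ι + 1))⁻¹)
      ≤ (Fintype.card ι : ℝ≥0∞) * (2 ^ Fintype.card ι * ENNReal.ofReal (4 / (T + 1))) := by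
  classical
  set m := Fintype.card ι with hm
  set K : ℕ → ℝ≥0∞ := fun n => ENNReal.ofReal (((T + n + 1) ^ (m+1))⁻¹) with hK
  set h : ι → (ι → ℤ) → ℝ≥0∞ := fun p u =>
    if ∀ q, (u q - c q).natAbs ≤ (u p - c p).natAbs then K ((u p - c p).natAbs) else 0 with hh
  have step1 : ∀ u : ι → ℤ,
      ENNReal.ofReal
        (((T + ((Finset.univ.sup fun p => (u p - c p).natAbs : ℕ) : ℝ) + 1) ^ (m+1))⁻¹)
        ≤ ∑ p : ι, h p u := by
    intro u
    obtain ⟨p0, -, hp0⟩ := Finset.exists_mem_eq_sup (α := ℕ) (Finset.univ : Finset ι)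
        Finset.univ_nonempty (fun p => (u p - c p).natAbs)
    have hc : ∀ q, (u q - c q).natAbs ≤ (u p0 - c p0).natAbs := by
      intro q
      have h5 := Finset.le_sup (f := fun p => (u p - c p).natAbs) (Finset.mem_univ q)
      rw [hp0] at h5
      exact h5
    have heq : ENNReal.ofReal
        (((T + ((Finset.univ.sup fun p => (u p - c p).natAbs : ℕ) : ℝ) + 1) ^ (m+1))⁻¹)
        = h p0 u := by
      rw [hp0]; simp only [hh]; rw [if_pos hc, hK]
    rw [heq]
    exact Finset.single_le_sum (f := fun p => h p u) (fun p _ => zero_le) (Finset.mem_univ p0)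
  have step2 : ∀ p : ι, ∑' u : ι → ℤ, h p u ≤ 2 ^ m * ENNReal.ofReal (4 / (T + 1)) := by
    intro p
    set m' := Fintype.card {q : ι // q ≠ p} with hm'
    have hmm : m = m' + 1 := by
      have h1 : Fintype.card {q : ι // q ≠ p} = Fintype.card ι - 1 := by
        simp [Fintype.card_subtype_compl]
      have h3 : 0 < Fintype.card ι := Fintype.card_pos
      rw [hm', hm, h1]
      omega
    set e := Equiv.funSplitAt p ℤ with he
    have he1 : ∀ (z : ℤ) (v : {q : ι // q ≠ p} → ℤ), e.symm (z, v) p = z := by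
      intro z v
      simp [he, Equiv.funSplitAt, Equiv.piSplitAt]
    have he2 : ∀ (z : ℤ) (v : {q : ι // q ≠ p} → ℤ) (q : ι) (hq : q ≠ p),
        e.symm (z, v) q = v ⟨q, hq⟩ := by
      intro z v q hq
      simp [he, Equiv.funSplitAt, Equiv.piSplitAt, hq]
    have hval : ∀ (z : ℤ) (v : {q : ι // q ≠ p} → ℤ),
        h p (e.symm (z, v)) =
          (if ∀ q' : {q : ι // q ≠ p}, (v q' - c ↑q').natAbs ≤ (z - c p).natAbs
            then (1:ℝ≥0∞) else 0) * K ((z - c p).natAbs) := by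
      intro z v
      have hiff : (∀ q, (e.symm (z,v) q - c q).natAbs ≤ (e.symm (z,v) p - c p).natAbs)
          ↔ (∀ q' : {q : ι // q ≠ p}, (v q' - c ↑q').natAbs ≤ (z - c p).natAbs) := by
        rw [he1 z v]
        constructor
        · intro H q'
          have h6 := H ↑q'
          rwa [he2 z v ↑q' q'.2] at h6
        · intro H q
          by_cases hq : q = p
          · subst hq; rw [he1 z v]
          · rw [he2 z v q hq]; exact H ⟨q, hq⟩
      simp only [hh]
      rw [if_congr hiff rfl rfl, he1 z v]
      split_ifs with hcond
      · rw [one_mul]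
      · rw [zero_mul]
    calc ∑' u : ι → ℤ, h p u
        = ∑' q : ℤ × ({q : ι // q ≠ p} → ℤ), h p (e.symm q) :=
          (Equiv.tsum_eq e.symm (h p)).symm
      _ = ∑' z : ℤ, ∑' v : {q : ι // q ≠ p} → ℤ, h p (e.symm (z, v)) := ENNReal.tsum_prod (f := fun z v => h p (e.symm (z, v)))
      _ = ∑' z : ℤ, (((2 * (z - c p).natAbs + 1) ^ m' : ℕ) : ℝ≥0∞) * K ((z - c p).natAbs) := by
          apply tsum_congr; intro z
          rw [tsum_congr (hval z), ENNReal.tsum_mul_right]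
          congr 1
          rw [boxCount (fun q' : {q : ι // q ≠ p} => c ↑q') ((z - c p).natAbs), hm']
      _ = ∑' z : ℤ, (((2 * z.natAbs + 1) ^ m' : ℕ) : ℝ≥0∞) * K z.natAbs :=
          Equiv.tsum_eq (Equiv.subRight (c p))
            (fun z : ℤ => (((2 * z.natAbs + 1) ^ m' : ℕ) : ℝ≥0∞) * K z.natAbs)
      _ ≤ ∑' z : ℤ, (2:ℝ≥0∞) ^ m * ENNReal.ofReal (((T + z.natAbs + 1) ^ 2)⁻¹) := by
          apply ENNReal.tsum_le_tsum
          intro z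
          set n := z.natAbs with hn
          have ha : (0:ℝ) < T + n + 1 := by positivity
          have hR : ((((2 * n + 1) ^ m' : ℕ)) : ℝ) * ((T + n + 1) ^ (m+1))⁻¹
              ≤ (2:ℝ) ^ m * ((T + n + 1) ^ 2)⁻¹ := by
            have hle : (2*(n:ℝ)+1) ≤ 2*(T+n+1) := by push_cast; linarith
            have h1 : (2*(n:ℝ)+1)^m' ≤ (2*(T+(n:ℝ)+1))^m' :=
              pow_le_pow_left₀ (by positivity) hle m'
            have hsplit : (T+(n:ℝ)+1)^(m+1) = (T+(n:ℝ)+1)^m' * (T+(n:ℝ)+1)^2 := by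
              rw [hmm, show m' + 1 + 1 = m' + 2 from rfl, pow_add]
            have hcast : ((((2 * n + 1) ^ m' : ℕ)) : ℝ) = (2*(n:ℝ)+1)^m' := by push_cast; ring
            rw [hcast, hsplit, mul_inv, ← mul_assoc]
            calc (2*(n:ℝ)+1)^m' * ((T+(n:ℝ)+1)^m')⁻¹ * ((T+(n:ℝ)+1)^2)⁻¹
                ≤ (2*(T+(n:ℝ)+1))^m' * ((T+(n:ℝ)+1)^m')⁻¹ * ((T+(n:ℝ)+1)^2)⁻¹ := by
                  gcongr
              _ = 2^m' * ((T+(n:ℝ)+1)^m' * ((T+(n:ℝ)+1)^m')⁻¹) * ((T+(n:ℝ)+1)^2)⁻¹ := by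
                  rw [mul_pow]; ring
              _ = 2^m' * ((T+(n:ℝ)+1)^2)⁻¹ := by
                  rw [mul_inv_cancel₀ (by positivity : ((T+(n:ℝ)+1)^m') ≠ 0), mul_one]
              _ ≤ 2^m * ((T+(n:ℝ)+1)^2)⁻¹ := by
                  gcongr
                  · norm_num
                  · omega
          calc (((2 * n + 1) ^ m' : ℕ) : ℝ≥0∞) * K n
              = ENNReal.ofReal (((((2 * n + 1) ^ m' : ℕ)) : ℝ) * ((T + n + 1) ^ (m+1))⁻¹) := by
                rw [hK]
                rw [ENNReal.ofReal_mul (by positivity), ENNReal.ofReal_natCast]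
            _ ≤ ENNReal.ofReal ((2:ℝ) ^ m * ((T + n + 1) ^ 2)⁻¹) := ENNReal.ofReal_le_ofReal hR
            _ = 2 ^ m * ENNReal.ofReal (((T + n + 1) ^ 2)⁻¹) := by
                rw [ENNReal.ofReal_mul (by positivity), ENNReal.ofReal_pow (by norm_num),
                  ENNReal.ofReal_ofNat]
      _ = 2 ^ m * ∑' z : ℤ, ENNReal.ofReal (((T + z.natAbs + 1) ^ 2)⁻¹) := ENNReal.tsum_mul_left
      _ ≤ 2 ^ m * ENNReal.ofReal (4 / (T + 1)) := mul_le_mul_right (sumZE T hT) _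
  calc ∑' u : ι → ℤ, ENNReal.ofReal
        (((T + ((Finset.univ.sup fun p => (u p - c p).natAbs : ℕ) : ℝ) + 1) ^ (m+1))⁻¹)
      ≤ ∑' u : ι → ℤ, ∑ p : ι, h p u := ENNReal.tsum_le_tsum step1
    _ = ∑ p : ι, ∑' u : ι → ℤ, h p u := Summable.tsum_finsetSum (fun _ _ => ENNReal.summable)
    _ ≤ ∑ _p : ι, 2 ^ m * ENNReal.ofReal (4 / (T + 1)) := Finset.sum_le_sum (fun p _ => step2 p)
    _ = (m : ℝ≥0∞) * (2 ^ m * ENNReal.ofReal (4 / (T + 1))) := by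
        rw [Finset.sum_const, Finset.card_univ, nsmul_eq_mul, hm]


private lemma vnorm_entries {d : ℕ} {v : Fin d → ℤ} (h : vnorm v = 1) (cc : Fin d) :
    (v cc).natAbs ≤ 1 := by
  have h0 : (0:ℝ) ≤ ∑ c, ((v c : ℝ))^2 := by positivity
  have h2 := Real.sq_sqrt h0
  rw [vnorm] at h
  rw [h] at h2
  have hsum : ∑ c, ((v c:ℝ))^2 = 1 := by rw [← h2]; norm_num
  have h1 : ((v cc:ℝ))^2 ≤ 1 := by
    rw [← hsum]
    exact Finset.single_le_sum (f := fun c => ((v c:ℝ))^2) (fun c _ => sq_nonneg _) (Finset.mem_univ cc)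
  have h3 : (v cc)^2 ≤ 1 := by exact_mod_cast h1
  by_contra hcon
  push_neg at hcon
  have h4 : 2 ≤ v cc ∨ v cc ≤ -2 := by omega
  rcases h4 with h4 | h4 <;> nlinarith

private lemma entry_le_cnorm {d k : ℕ} (y : Conf d k) (l : Fin k) (cc : Fin d) :
    (((y l cc).natAbs : ℕ) : ℝ) ≤ cnorm y := by
  have h1 : ((y l cc : ℝ))^2 ≤ ∑ a, ∑ b, ((y a b : ℝ))^2 := by
    calc ((y l cc:ℝ))^2 ≤ ∑ b, ((y l b:ℝ))^2 :=
        Finset.single_le_sum (f := fun b => ((y l b:ℝ))^2) (fun b _ => sq_nonneg _)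
          (Finset.mem_univ cc)
      _ ≤ ∑ a, ∑ b, ((y a b:ℝ))^2 :=
        Finset.single_le_sum (f := fun a => ∑ b, ((y a b:ℝ))^2)
          (fun a _ => by positivity) (Finset.mem_univ l)
  have h2 : (((y l cc).natAbs : ℕ) : ℝ) = |((y l cc : ℝ))| := by
    rw [Nat.cast_natAbs, Int.cast_abs]
  rw [h2, ← Real.sqrt_sq_eq_abs, cnorm]
  exact Real.sqrt_le_sqrt h1

/-- Lattice sum estimate: for integers `d ≥ 1`, `k ≥ 2` and fixed `1 ≤ i < j ≤ k` there is a
constant `C = C(k,d)` such that for every `T ≥ 0` and `x ∈ (ℤ^d)^k`,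
`Σ_{w ∈ (ℤ^d)^k} 1{‖w_i − w_j‖ = 1}(T + ‖x − w‖ + 1)^{−((k−1)d+1)} ≤ C/(T+1)`. -/
theorem lattice_sum_collision (d k : ℕ) (hd : 1 ≤ d) (hk : 2 ≤ k)
    (i j : Fin k) (hij : i < j) :
    ∃ C : ℝ, 0 < C ∧ ∀ T : ℝ, 0 ≤ T → ∀ x : Conf d k,
      Summable (fun w : Conf d k =>
        (if vnorm (w i - w j) = 1 then (1 : ℝ) else 0) *
          (T + cnorm (x - w) + 1) ^ (-(((k : ℝ) - 1) * d + 1))) ∧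
      (∑' w : Conf d k,
        (if vnorm (w i - w j) = 1 then (1 : ℝ) else 0) *
          (T + cnorm (x - w) + 1) ^ (-(((k : ℝ) - 1) * d + 1))) ≤ C / (T + 1) := by
  classical
  have hij' : i ≠ j := ne_of_lt hij
  set m : ℕ := (k-1)*d with hmdef
  have hm1 : 1 ≤ m := by
    rw [hmdef]
    calc 1 = 1*1 := (one_mul 1).symm
      _ ≤ (k-1)*d := Nat.mul_le_mul (by omega) hd
  have hm0 : (0:ℝ) < m := by
    have : (1:ℝ) ≤ (m:ℝ) := by exact_mod_cast hm1
    linarith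
  refine ⟨(3:ℝ)^d * (m * 2^m * 4), ?_, ?_⟩
  · have h1 : (0:ℝ) < 3^d := by positivity
    have h2 : (0:ℝ) < 2^m := by positivity
    have h3 : (0:ℝ) < (m:ℝ) * 2^m * 4 := by
      apply mul_pos (mul_pos hm0 h2); norm_num
    exact mul_pos h1 h3
  intro T hT x
  haveI : Nonempty (Fin d) := ⟨⟨0, hd⟩⟩
  haveI : Nonempty {l : Fin k // l ≠ j} := ⟨⟨i, hij'⟩⟩
  have hcard : Fintype.card ({l : Fin k // l ≠ j} × Fin d) = m := by
    rw [Fintype.card_prod, Fintype.card_fin]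
    have h1 : Fintype.card {l : Fin k // l ≠ j} = k - 1 := by
      simp [Fintype.card_subtype_compl]
    rw [h1, hmdef]
  have hcnn : ∀ w : Conf d k, 0 ≤ cnorm (x - w) := fun w => Real.sqrt_nonneg _
  have hex : ∀ s : ℝ, 0 ≤ s →
      (T + s + 1) ^ (-(((k:ℝ) - 1) * d + 1)) = ((T + s + 1) ^ (m+1))⁻¹ := by
    intro s hs
    have h1 : (((k:ℝ) - 1) * d + 1) = ((m + 1 : ℕ) : ℝ) := by
      rw [hmdef]
      push_cast [Nat.cast_sub (show 1 ≤ k by omega)]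
      ring
    rw [h1, Real.rpow_neg (by positivity), Real.rpow_natCast]
  set F : Conf d k → ℝ := fun w =>
    (if vnorm (w i - w j) = 1 then (1 : ℝ) else 0) *
      (T + cnorm (x - w) + 1) ^ (-(((k : ℝ) - 1) * d + 1)) with hF
  have hFnn : ∀ w, 0 ≤ F w := by
    intro w; rw [hF]; dsimp only
    apply mul_nonneg
    · split_ifs <;> norm_num
    · exact Real.rpow_nonneg (by have := hcnn w; linarith) _
  set G : Conf d k → ℝ≥0∞ := fun w =>
    (if ∀ cc : Fin d, (w j cc - w i cc).natAbs ≤ 1 then (1:ℝ≥0∞) else 0) *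
      ENNReal.ofReal (((T + cnorm (x - w) + 1) ^ (m+1))⁻¹) with hG
  have hFG : ∀ w, ENNReal.ofReal (F w) ≤ G w := by
    intro w
    rw [hF, hG]; dsimp only
    by_cases hv : vnorm (w i - w j) = 1
    · have hbox : ∀ cc : Fin d, (w j cc - w i cc).natAbs ≤ 1 := by
        intro cc
        have h5 := vnorm_entries hv cc
        have h6 : (w i - w j) cc = w i cc - w j cc := rfl
        rw [h6] at h5
        omega
      rw [if_pos hv, if_pos hbox, one_mul, one_mul, hex _ (hcnn w)]
    · rw [if_neg hv, zero_mul, ENNReal.ofReal_zero]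
      exact zero_le
  set e1 := Equiv.funSplitAt j (Fin d → ℤ) with he1def
  have he1j : ∀ (z : Fin d → ℤ) (v : {l : Fin k // l ≠ j} → Fin d → ℤ),
      e1.symm (z, v) j = z := by
    intro z v; simp [he1def, Equiv.funSplitAt, Equiv.piSplitAt]
  have he1l : ∀ (z : Fin d → ℤ) (v : {l : Fin k // l ≠ j} → Fin d → ℤ) (l : Fin k)
      (hl : l ≠ j), e1.symm (z, v) l = v ⟨l, hl⟩ := by
    intro z v l hl; simp [he1def, Equiv.funSplitAt, Equiv.piSplitAt, hl]
  set Mv : ({l : Fin k // l ≠ j} → Fin d → ℤ) → ℕ := fun v =>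
    Finset.univ.sup
      (fun p : {l : Fin k // l ≠ j} × Fin d => (v p.1 p.2 - x ↑p.1 p.2).natAbs) with hMv
  have stepB : ∀ v : {l : Fin k // l ≠ j} → Fin d → ℤ,
      ∑' z : Fin d → ℤ, G (e1.symm (z, v))
        ≤ ((3^d : ℕ) : ℝ≥0∞) * ENNReal.ofReal (((T + (Mv v : ℝ) + 1) ^ (m+1))⁻¹) := by
    intro v
    have hpt : ∀ z : Fin d → ℤ, G (e1.symm (z, v)) ≤
        (if ∀ cc : Fin d, (z cc - v ⟨i, hij'⟩ cc).natAbs ≤ 1 then (1:ℝ≥0∞) else 0) *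
          ENNReal.ofReal (((T + (Mv v : ℝ) + 1) ^ (m+1))⁻¹) := by
      intro z
      rw [hG]; dsimp only
      have hcondiff : (∀ cc : Fin d,
          ((e1.symm (z,v)) j cc - (e1.symm (z,v)) i cc).natAbs ≤ 1)
          ↔ (∀ cc : Fin d, (z cc - v ⟨i, hij'⟩ cc).natAbs ≤ 1) := by
        rw [he1j z v, he1l z v i hij']
      rw [if_congr hcondiff rfl rfl]
      apply mul_le_mul' le_rfl
      apply ENNReal.ofReal_le_ofReal
      have hMle : ((Mv v : ℕ) : ℝ) ≤ cnorm (x - e1.symm (z, v)) := by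
        obtain ⟨p0, -, hp0⟩ := Finset.exists_mem_eq_sup (α := ℕ)
          (Finset.univ : Finset ({l : Fin k // l ≠ j} × Fin d)) Finset.univ_nonempty
          (fun p => (v p.1 p.2 - x ↑p.1 p.2).natAbs)
        have h7 : (x - e1.symm (z, v)) ↑p0.1 p0.2 = x ↑p0.1 p0.2 - v p0.1 p0.2 := by
          rw [show (x - e1.symm (z,v)) ↑p0.1 p0.2
              = x ↑p0.1 p0.2 - (e1.symm (z,v)) ↑p0.1 p0.2 from rfl,
            he1l z v ↑p0.1 p0.1.2]
        have hent : ((x - e1.symm (z, v)) ↑p0.1 p0.2).natAbs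
            = (v p0.1 p0.2 - x ↑p0.1 p0.2).natAbs := by
          rw [h7]; omega
        rw [hMv]; dsimp only; rw [hp0, ← hent]
        exact entry_le_cnorm (x - e1.symm (z, v)) ↑p0.1 p0.2
      apply inv_anti₀ (by positivity)
      apply pow_le_pow_left₀ (by positivity)
      linarith
    calc ∑' z : Fin d → ℤ, G (e1.symm (z, v))
        ≤ ∑' z : Fin d → ℤ,
          (if ∀ cc : Fin d, (z cc - v ⟨i, hij'⟩ cc).natAbs ≤ 1 then (1:ℝ≥0∞) else 0) *
            ENNReal.ofReal (((T + (Mv v : ℝ) + 1) ^ (m+1))⁻¹) := ENNReal.tsum_le_tsum hpt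
      _ = (∑' z : Fin d → ℤ,
            if ∀ cc : Fin d, (z cc - v ⟨i, hij'⟩ cc).natAbs ≤ 1 then (1:ℝ≥0∞) else 0) *
            ENNReal.ofReal (((T + (Mv v : ℝ) + 1) ^ (m+1))⁻¹) := ENNReal.tsum_mul_right
      _ = (((2*1+1)^(Fintype.card (Fin d)) : ℕ) : ℝ≥0∞) *
            ENNReal.ofReal (((T + (Mv v : ℝ) + 1) ^ (m+1))⁻¹) := by
          congr 1
          rw [← boxCount (v ⟨i, hij'⟩) 1]
          apply tsum_congr
          intro z
          by_cases hz : ∀ cc : Fin d, (z cc - v ⟨i, hij'⟩ cc).natAbs ≤ 1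
          · simp [hz]
          · simp [hz]
      _ = ((3^d : ℕ) : ℝ≥0∞) * ENNReal.ofReal (((T + (Mv v : ℝ) + 1) ^ (m+1))⁻¹) := by
          norm_num [Fintype.card_fin]
  have master : ∑' w : Conf d k, ENNReal.ofReal (F w)
      ≤ ENNReal.ofReal ((3:ℝ)^d * (m * 2^m * 4) / (T + 1)) := by
    calc ∑' w : Conf d k, ENNReal.ofReal (F w) ≤ ∑' w, G w := ENNReal.tsum_le_tsum hFG
      _ = ∑' q : (Fin d → ℤ) × ({l : Fin k // l ≠ j} → Fin d → ℤ), G (e1.symm q) :=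
          (Equiv.tsum_eq e1.symm G).symm
      _ = ∑' (z : Fin d → ℤ) (v : {l : Fin k // l ≠ j} → Fin d → ℤ), G (e1.symm (z, v)) :=
          ENNReal.tsum_prod (f := fun z v => G (e1.symm (z, v)))
      _ = ∑' (v : {l : Fin k // l ≠ j} → Fin d → ℤ) (z : Fin d → ℤ), G (e1.symm (z, v)) :=
          ENNReal.tsum_comm
      _ ≤ ∑' v : {l : Fin k // l ≠ j} → Fin d → ℤ,
            ((3^d : ℕ) : ℝ≥0∞) * ENNReal.ofReal (((T + (Mv v : ℝ) + 1) ^ (m+1))⁻¹) :=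
          ENNReal.tsum_le_tsum stepB
      _ = ((3^d : ℕ) : ℝ≥0∞) *
          ∑' v : {l : Fin k // l ≠ j} → Fin d → ℤ,
            ENNReal.ofReal (((T + (Mv v : ℝ) + 1) ^ (m+1))⁻¹) := ENNReal.tsum_mul_left
      _ = ((3^d : ℕ) : ℝ≥0∞) *
          ∑' u : ({l : Fin k // l ≠ j} × Fin d) → ℤ,
            ENNReal.ofReal
              (((T + ((Finset.univ.sup fun p => (u p - x ↑p.1 p.2).natAbs : ℕ) : ℝ) + 1)
                ^ (m+1))⁻¹) := by
          congr 1
          exact (Equiv.tsum_eq (Equiv.curry {l : Fin k // l ≠ j} (Fin d) ℤ)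
            (fun v => ENNReal.ofReal (((T + (Mv v : ℝ) + 1) ^ (m+1))⁻¹))).symm
      _ ≤ ((3^d : ℕ) : ℝ≥0∞) * ((m : ℝ≥0∞) * (2^m * ENNReal.ofReal (4/(T+1)))) := by
          apply mul_le_mul_right
          have hA := lemA (ι := {l : Fin k // l ≠ j} × Fin d) (fun p => x ↑p.1 p.2) T hT
          rw [hcard] at hA
          exact hA
      _ = ENNReal.ofReal ((3:ℝ)^d * (m * 2^m * 4) / (T+1)) := by
          rw [show ((2:ℝ≥0∞)^m) = ENNReal.ofReal ((2:ℝ)^m) from by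
              rw [ENNReal.ofReal_pow (by norm_num), ENNReal.ofReal_ofNat],
            ← ENNReal.ofReal_natCast (3^d), ← ENNReal.ofReal_natCast m,
            ← ENNReal.ofReal_mul (by positivity),
            ← ENNReal.ofReal_mul (by positivity),
            ← ENNReal.ofReal_mul (by positivity)]
          congr 1
          push_cast
          ring
  have hCnn : (0:ℝ) ≤ (3:ℝ)^d * (m * 2^m * 4) / (T+1) := by positivity
  have hne : (∑' w : Conf d k, ENNReal.ofReal (F w)) ≠ ⊤ :=
    (lt_of_le_of_lt master ENNReal.ofReal_lt_top).ne
  constructor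
  · exact (ENNReal.summable_toReal hne).congr (fun w => ENNReal.toReal_ofReal (hFnn w))
  · calc (∑' w : Conf d k, F w) = ∑' w : Conf d k, (ENNReal.ofReal (F w)).toReal :=
        tsum_congr (fun w => (ENNReal.toReal_ofReal (hFnn w)).symm)
      _ = (∑' w : Conf d k, ENNReal.ofReal (F w)).toReal :=
        (ENNReal.tsum_toReal_eq (fun w => ENNReal.ofReal_ne_top)).symm
      _ ≤ (ENNReal.ofReal ((3:ℝ)^d * (m * 2^m * 4) / (T+1))).toReal :=
        ENNReal.toReal_mono ENNReal.ofReal_ne_top master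
      _ = (3:ℝ)^d * (m * 2^m * 4) / (T+1) := ENNReal.toReal_ofReal hCnn


end SSEPPaper
end
end

section
/- Let d ≥ 2 be an integer. There exists a constant C = C(d) such that for every t ≥ 0: if d = 2 then ∫_0^t (√(t−s) + 1)^{−d} (√s + 1)^{−1} ds ≤ C log(t+2) / (√t + 1), and if d ≥ 3 then ∫_0^t (√(t−s) + 1)^{−d} (√s + 1)^{−1} ds ≤ C / (√t + 1). -/
open intervalIntegral Set

private lemma contAux (d : ℕ) (t : ℝ) :
    Continuous fun s : ℝ => 1 / ((Real.sqrt (t - s) + 1) ^ d * (Real.sqrt s + 1)) := by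
  apply Continuous.div continuous_const
  · exact (((Real.continuous_sqrt.comp (continuous_const.sub continuous_id)).add
      continuous_const).pow d).mul (Real.continuous_sqrt.add continuous_const)
  · intro x; positivity

private lemma sqrtHalf (t : ℝ) (ht : 0 ≤ t) :
    (Real.sqrt t + 1) / 2 ≤ Real.sqrt (t / 2) + 1 := by
  have h4 : Real.sqrt (t / 4) = Real.sqrt t / 2 := by
    rw [Real.sqrt_div ht, show Real.sqrt 4 = 2 by
      rw [show (4:ℝ) = 2 ^ 2 by norm_num, Real.sqrt_sq (by norm_num)]]
  have h := Real.sqrt_le_sqrt (show t / 4 ≤ t / 2 by linarith)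
  rw [h4] at h
  linarith

private lemma sqrtAddOne (x : ℝ) (hx : 0 ≤ x) :
    Real.sqrt (x + 1) ≤ Real.sqrt x + 1 := by
  have h : x + 1 ≤ (Real.sqrt x + 1) ^ 2 := by
    nlinarith [Real.sq_sqrt hx, Real.sqrt_nonneg x]
  calc Real.sqrt (x + 1) ≤ Real.sqrt ((Real.sqrt x + 1) ^ 2) := Real.sqrt_le_sqrt h
    _ = Real.sqrt x + 1 := Real.sqrt_sq (by positivity)

private lemma mainBound (d : ℕ) (hd : 2 ≤ d) (t : ℝ) (ht : 0 ≤ t) :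
    (∫ s in (0 : ℝ)..t, 1 / ((Real.sqrt (t - s) + 1) ^ d * (Real.sqrt s + 1))) ≤
      (2 ^ (d + 1) + 2 * ∫ u in (0 : ℝ)..t / 2, 1 / Real.sqrt (u + 1) ^ d) /
        (Real.sqrt t + 1) := by
  set Q : ℝ := Real.sqrt t + 1 with hQdef
  have hQ1 : 1 ≤ Q := by rw [hQdef]; linarith [Real.sqrt_nonneg t]
  have hQ0 : 0 < Q := by linarith
  have ht2 : 0 ≤ t / 2 := by linarith
  have htt : t / 2 ≤ t := by linarith
  have hint : ∀ a b : ℝ, IntervalIntegrable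
      (fun s => 1 / ((Real.sqrt (t - s) + 1) ^ d * (Real.sqrt s + 1)))
      MeasureTheory.volume a b :=
    fun a b => (contAux d t).intervalIntegrable a b
  have hsplit := integral_add_adjacent_intervals (hint 0 (t / 2)) (hint (t / 2) t)
  rw [← hsplit]
  -- Part 1 bound
  have hB1cont : ContinuousOn (fun s : ℝ => (2 / Q) ^ d * ((s + 1) ^ (-(1 : ℝ) / 2)))
      (uIcc 0 (t / 2)) := by
    apply ContinuousOn.mul continuousOn_const
    apply ContinuousOn.rpow_const (by fun_prop)
    intro x hx
    rw [Set.uIcc_of_le ht2] at hx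
    exact Or.inl (by have := hx.1; positivity)
  have hI1 : (∫ s in (0 : ℝ)..t / 2, 1 / ((Real.sqrt (t - s) + 1) ^ d * (Real.sqrt s + 1))) ≤
      ∫ s in (0 : ℝ)..t / 2, (2 / Q) ^ d * ((s + 1) ^ (-(1 : ℝ) / 2)) := by
    apply integral_mono_on ht2 (hint 0 (t / 2)) (hB1cont.intervalIntegrable)
    intro s hs
    have hs0 : 0 ≤ s := hs.1
    have hts : t / 2 ≤ t - s := by linarith [hs.2]
    have h1 : Q / 2 ≤ Real.sqrt (t - s) + 1 := by
      have := Real.sqrt_le_sqrt hts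
      have h2 := sqrtHalf t ht
      rw [hQdef]
      linarith
    have h2 : Real.sqrt (s + 1) ≤ Real.sqrt s + 1 := sqrtAddOne s hs0
    have hrpow : (s + 1) ^ (-(1 : ℝ) / 2) = 1 / Real.sqrt (s + 1) := by
      rw [show -(1 : ℝ) / 2 = -(1 / 2) by ring, Real.rpow_neg (by linarith),
        ← Real.sqrt_eq_rpow, one_div]
    rw [hrpow]
    have hkey : (Q / 2) ^ d * Real.sqrt (s + 1) ≤
        (Real.sqrt (t - s) + 1) ^ d * (Real.sqrt s + 1) :=
      mul_le_mul (pow_le_pow_left₀ (by positivity) h1 d) h2 (Real.sqrt_nonneg _) (by positivity)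
    have hsp : (1:ℝ) ≤ Real.sqrt (s + 1) := Real.one_le_sqrt.mpr (by linarith)
    have hpos : (0 : ℝ) < (Q / 2) ^ d * Real.sqrt (s + 1) := by positivity
    calc 1 / ((Real.sqrt (t - s) + 1) ^ d * (Real.sqrt s + 1))
        ≤ 1 / ((Q / 2) ^ d * Real.sqrt (s + 1)) := one_div_le_one_div_of_le hpos hkey
      _ = (2 / Q) ^ d * (1 / Real.sqrt (s + 1)) := by
          field_simp
          rw [← mul_pow, div_mul_div_comm, mul_comm Q 2, div_self (mul_pos two_pos hQ0).ne', one_pow]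
  -- evaluate part-1 majorant integral
  have hval1 : (∫ s in (0 : ℝ)..t / 2, (2 / Q) ^ d * ((s + 1) ^ (-(1 : ℝ) / 2))) ≤
      2 ^ (d + 1) / Q := by
    rw [integral_const_mul]
    have hcomp : (∫ s in (0 : ℝ)..t / 2, (s + 1) ^ (-(1 : ℝ) / 2)) =
        ∫ x in (1 : ℝ)..(t / 2 + 1), x ^ (-(1 : ℝ) / 2) := by
      have := integral_comp_add_right (a := 0) (b := t / 2)
        (fun x : ℝ => x ^ (-(1 : ℝ) / 2)) 1
      simpa using this
    rw [hcomp, integral_rpow (Or.inl (by norm_num))]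
    have hexp : (-(1 : ℝ) / 2 + 1) = 1 / 2 := by norm_num
    rw [hexp, Real.one_rpow, ← Real.sqrt_eq_rpow]
    have hsq : Real.sqrt (t / 2 + 1) ≤ Q := by
      have h1 : Real.sqrt (t / 2 + 1) ≤ Real.sqrt (t + 1) := Real.sqrt_le_sqrt (by linarith)
      have h2 := sqrtAddOne t ht
      rw [hQdef]
      linarith
    have hle : (Real.sqrt (t / 2 + 1) - 1) / (1 / 2) ≤ 2 * Q := by
      rw [div_le_iff₀ (by norm_num)]
      linarith
    calc (2 / Q) ^ d * ((Real.sqrt (t / 2 + 1) - 1) / (1 / 2))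
        ≤ (2 / Q) ^ d * (2 * Q) := mul_le_mul_of_nonneg_left hle (by positivity)
      _ ≤ 2 ^ (d + 1) / Q := by
          rw [div_pow, div_mul_eq_mul_div, div_le_div_iff₀ (by positivity) hQ0]
          have h2 : Q ^ 2 ≤ Q ^ d := pow_le_pow_right₀ hQ1 hd
          have he : (2:ℝ) ^ d * (2 * Q) * Q = 2 ^ (d+1) * Q ^ 2 := by ring
          rw [he]
          exact mul_le_mul_of_nonneg_left h2 (by positivity)
  -- Part 2 bound
  have hB2cont : ContinuousOn (fun s : ℝ => (2 / Q) * (1 / Real.sqrt (t - s + 1) ^ d))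
      (uIcc (t/2) t) := by
    apply ContinuousOn.mul continuousOn_const
    apply ContinuousOn.div continuousOn_const
    · exact ((Real.continuous_sqrt.comp ((continuous_const.sub continuous_id).add
        continuous_const)).pow d).continuousOn
    · intro x hx
      rw [Set.uIcc_of_le htt] at hx
      have h1 : (1:ℝ) ≤ t - x + 1 := by linarith [hx.2]
      have h2 : (1:ℝ) ≤ Real.sqrt (t - x + 1) := Real.one_le_sqrt.mpr h1
      positivity
  have hI2 : (∫ s in (t/2 : ℝ)..t, 1 / ((Real.sqrt (t - s) + 1) ^ d * (Real.sqrt s + 1))) ≤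
      (2 / Q) * ∫ u in (0 : ℝ)..t / 2, 1 / Real.sqrt (u + 1) ^ d := by
    have hmono : (∫ s in (t/2 : ℝ)..t, 1 / ((Real.sqrt (t - s) + 1) ^ d * (Real.sqrt s + 1))) ≤
        ∫ s in (t/2 : ℝ)..t, (2 / Q) * (1 / Real.sqrt (t - s + 1) ^ d) := by
      apply integral_mono_on htt (hint (t/2) t) hB2cont.intervalIntegrable
      intro s hs
      have hs0 : 0 ≤ t - s := by linarith [hs.2]
      have h1 : Q / 2 ≤ Real.sqrt s + 1 := by
        have := Real.sqrt_le_sqrt hs.1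
        have h2 := sqrtHalf t ht
        rw [hQdef]
        linarith
      have h2 : Real.sqrt (t - s + 1) ≤ Real.sqrt (t - s) + 1 := sqrtAddOne _ hs0
      have h2' : Real.sqrt (t - s + 1) ^ d ≤ (Real.sqrt (t - s) + 1) ^ d :=
        pow_le_pow_left₀ (Real.sqrt_nonneg _) h2 d
      have hkey : Real.sqrt (t - s + 1) ^ d * (Q / 2) ≤
          (Real.sqrt (t - s) + 1) ^ d * (Real.sqrt s + 1) :=
        mul_le_mul h2' h1 (by positivity) (by positivity)
      have hsp : (1:ℝ) ≤ Real.sqrt (t - s + 1) := Real.one_le_sqrt.mpr (by linarith)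
      have hpos : (0 : ℝ) < Real.sqrt (t - s + 1) ^ d * (Q / 2) := by positivity
      calc 1 / ((Real.sqrt (t - s) + 1) ^ d * (Real.sqrt s + 1))
          ≤ 1 / (Real.sqrt (t - s + 1) ^ d * (Q / 2)) := one_div_le_one_div_of_le hpos hkey
        _ = (2 / Q) * (1 / Real.sqrt (t - s + 1) ^ d) := by
            field_simp
    have hcomp : (∫ s in (t/2 : ℝ)..t, 1 / Real.sqrt (t - s + 1) ^ d) =
        ∫ u in (0 : ℝ)..t / 2, 1 / Real.sqrt (u + 1) ^ d := by
      have h := integral_comp_sub_left (a := t/2) (b := t)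
        (fun u : ℝ => 1 / Real.sqrt (u + 1) ^ d) t
      rw [show t - t = 0 by ring, show t - t/2 = t/2 by ring] at h
      exact h
    calc (∫ s in (t/2 : ℝ)..t, 1 / ((Real.sqrt (t - s) + 1) ^ d * (Real.sqrt s + 1)))
        ≤ ∫ s in (t/2 : ℝ)..t, (2 / Q) * (1 / Real.sqrt (t - s + 1) ^ d) := hmono
      _ = (2 / Q) * ∫ s in (t/2 : ℝ)..t, 1 / Real.sqrt (t - s + 1) ^ d := integral_const_mul _ _
      _ = (2 / Q) * ∫ u in (0 : ℝ)..t / 2, 1 / Real.sqrt (u + 1) ^ d := by rw [hcomp]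
  have hfin := add_le_add (le_trans hI1 hval1) hI2
  calc (∫ s in (0 : ℝ)..t / 2, 1 / ((Real.sqrt (t - s) + 1) ^ d * (Real.sqrt s + 1))) +
        ∫ s in (t/2 : ℝ)..t, 1 / ((Real.sqrt (t - s) + 1) ^ d * (Real.sqrt s + 1))
      ≤ 2 ^ (d + 1) / Q + (2 / Q) * ∫ u in (0 : ℝ)..t / 2, 1 / Real.sqrt (u + 1) ^ d := hfin
    _ = (2 ^ (d + 1) + 2 * ∫ u in (0 : ℝ)..t / 2, 1 / Real.sqrt (u + 1) ^ d) / Q := by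
        field_simp

private lemma Jbound2 (t : ℝ) (ht : 0 ≤ t) :
    (∫ u in (0 : ℝ)..t / 2, 1 / Real.sqrt (u + 1) ^ 2) ≤ Real.log (t + 2) := by
  have ht2 : 0 ≤ t / 2 := by linarith
  have hcongr : (∫ u in (0 : ℝ)..t / 2, 1 / Real.sqrt (u + 1) ^ 2) =
      ∫ u in (0 : ℝ)..t / 2, 1 / (u + 1) := by
    apply integral_congr
    intro u hu
    rw [Set.uIcc_of_le ht2] at hu
    show 1 / Real.sqrt (u + 1) ^ 2 = 1 / (u + 1)
    rw [Real.sq_sqrt (by linarith [hu.1])]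
  rw [hcongr]
  have hcomp : (∫ u in (0 : ℝ)..t / 2, 1 / (u + 1)) =
      ∫ x in (1 : ℝ)..(t / 2 + 1), 1 / x := by
    have := integral_comp_add_right (a := 0) (b := t / 2) (fun x : ℝ => 1 / x) 1
    simpa using this
  rw [hcomp, integral_one_div (by
    rw [Set.uIcc_of_le (by linarith : (1:ℝ) ≤ t / 2 + 1)]
    intro hc
    linarith [hc.1])]
  rw [div_one]
  exact Real.log_le_log (by linarith) (by linarith)

private lemma Jbound3 (d : ℕ) (hd : 3 ≤ d) (t : ℝ) (ht : 0 ≤ t) :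
    (∫ u in (0 : ℝ)..t / 2, 1 / Real.sqrt (u + 1) ^ d) ≤ 2 := by
  have ht2 : 0 ≤ t / 2 := by linarith
  have hHcont : ContinuousOn (fun u : ℝ => 1 / Real.sqrt (u + 1) ^ d) (uIcc 0 (t/2)) := by
    apply ContinuousOn.div continuousOn_const
    · exact ((Real.continuous_sqrt.comp (continuous_id.add continuous_const)).pow d).continuousOn
    · intro x hx
      rw [Set.uIcc_of_le ht2] at hx
      have h2 : (1:ℝ) ≤ Real.sqrt (x + 1) := Real.one_le_sqrt.mpr (by linarith [hx.1])
      positivity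
  have hBcont : ContinuousOn (fun u : ℝ => ((u + 1) ^ (-(3 : ℝ) / 2))) (uIcc 0 (t/2)) := by
    apply ContinuousOn.rpow_const (by fun_prop)
    intro x hx
    rw [Set.uIcc_of_le ht2] at hx
    exact Or.inl (by have := hx.1; positivity)
  have hmono : (∫ u in (0 : ℝ)..t / 2, 1 / Real.sqrt (u + 1) ^ d) ≤
      ∫ u in (0 : ℝ)..t / 2, (u + 1) ^ (-(3 : ℝ) / 2) := by
    apply integral_mono_on ht2 hHcont.intervalIntegrable hBcont.intervalIntegrable
    intro u hu
    have hu0 : 0 ≤ u := hu.1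
    have h1 : (1:ℝ) ≤ Real.sqrt (u + 1) := Real.one_le_sqrt.mpr (by linarith)
    have h3 : Real.sqrt (u + 1) ^ 3 ≤ Real.sqrt (u + 1) ^ d := pow_le_pow_right₀ h1 hd
    have heq : Real.sqrt (u + 1) ^ 3 = (u + 1) ^ ((3 : ℝ) / 2) := by
      rw [Real.sqrt_eq_rpow, ← Real.rpow_natCast ((u+1) ^ ((1:ℝ)/2)) 3,
        ← Real.rpow_mul (by linarith)]
      norm_num
    have hrp : (u + 1) ^ (-(3 : ℝ) / 2) = 1 / (u + 1) ^ ((3 : ℝ) / 2) := by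
      rw [show -(3 : ℝ) / 2 = -(3 / 2) by ring, Real.rpow_neg (by linarith), one_div]
    rw [hrp, ← heq]
    apply one_div_le_one_div_of_le (by positivity) h3
  have hval : (∫ u in (0 : ℝ)..t / 2, (u + 1) ^ (-(3 : ℝ) / 2)) ≤ 2 := by
    have hcomp : (∫ u in (0 : ℝ)..t / 2, (u + 1) ^ (-(3 : ℝ) / 2)) =
        ∫ x in (1 : ℝ)..(t / 2 + 1), x ^ (-(3 : ℝ) / 2) := by
      have := integral_comp_add_right (a := 0) (b := t / 2)
        (fun x : ℝ => x ^ (-(3 : ℝ) / 2)) 1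
      simpa using this
    rw [hcomp, integral_rpow (Or.inr ⟨by norm_num, by
      rw [Set.uIcc_of_le (by linarith : (1:ℝ) ≤ t / 2 + 1)]
      intro hc
      linarith [hc.1]⟩)]
    have hexp : (-(3 : ℝ) / 2 + 1) = -(1 / 2) := by norm_num
    rw [hexp, Real.one_rpow]
    have hnn : 0 ≤ (t / 2 + 1) ^ (-(1/2) : ℝ) := Real.rpow_nonneg (by linarith) _
    rw [div_le_iff_of_neg (by norm_num : (-(1/2) : ℝ) < 0)]
    linarith
  linarith

/-- Convolution-type integral bound: for an integer `d ≥ 2` there is a constant `C = C(d)` such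
that for every `t ≥ 0`, `∫_0^t (√(t−s)+1)^{−d}(√s+1)^{−1} ds` is bounded by
`C log(t+2)/(√t+1)` when `d = 2` and by `C/(√t+1)` when `d ≥ 3`. -/
theorem integral_convolution_bound (d : ℕ) (hd : 2 ≤ d) :
    ∃ C : ℝ, 0 < C ∧ ∀ t : ℝ, 0 ≤ t →
      (d = 2 →
        (∫ s in (0 : ℝ)..t, 1 / ((Real.sqrt (t - s) + 1) ^ d * (Real.sqrt s + 1))) ≤
          C * Real.log (t + 2) / (Real.sqrt t + 1)) ∧
      (3 ≤ d →
        (∫ s in (0 : ℝ)..t, 1 / ((Real.sqrt (t - s) + 1) ^ d * (Real.sqrt s + 1))) ≤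
          C / (Real.sqrt t + 1)) := by
  have hlog2 : 0 < Real.log 2 := Real.log_pos (by norm_num)
  refine ⟨(2 ^ (d + 1) + 4) / Real.log 2 + 2, ?_, ?_⟩
  · have h1 : (0:ℝ) < (2 ^ (d + 1) + 4) / Real.log 2 := div_pos (by positivity) hlog2
    linarith
  intro t ht
  have hQ0 : (0:ℝ) < Real.sqrt t + 1 := by positivity
  have hmain := mainBound d hd t ht
  constructor
  · intro hd2
    subst hd2
    have hJ := Jbound2 t ht
    have hL : Real.log 2 ≤ Real.log (t + 2) := Real.log_le_log (by norm_num) (by linarith)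
    have hLpos : 0 < Real.log (t + 2) := lt_of_lt_of_le hlog2 hL
    refine le_trans hmain ?_
    rw [div_le_div_iff₀ hQ0 hQ0]
    apply mul_le_mul_of_nonneg_right ?_ (le_of_lt hQ0)
    have hdiv : ((2 ^ (2 + 1) + 4 : ℝ) / Real.log 2) * Real.log 2 ≤
        ((2 ^ (2 + 1) + 4 : ℝ) / Real.log 2) * Real.log (t + 2) :=
      mul_le_mul_of_nonneg_left hL (le_of_lt (div_pos (by positivity) hlog2))
    rw [div_mul_cancel₀ _ (ne_of_gt hlog2)] at hdiv
    nlinarith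
  · intro hd3
    have hJ := Jbound3 d hd3 t ht
    refine le_trans hmain ?_
    rw [div_le_div_iff₀ hQ0 hQ0]
    apply mul_le_mul_of_nonneg_right ?_ (le_of_lt hQ0)
    have hge : (2 ^ (d + 1) + 4 : ℝ) ≤ (2 ^ (d + 1) + 4) / Real.log 2 := by
      apply le_div_self (by positivity) hlog2
      linarith [Real.log_le_sub_one_of_pos (by norm_num : (0:ℝ) < 2)]
    linarith
end

section
/- For every m > 0 and every c₁, c₂ > 0 there exists a constant C such that for all t ≥ 2 and all r ≥ 0, (√t + 1)^{−m} · exp( − c₁ t (log t)^{−2} Φ( r log t / (c₂² t) ) ) ≤ C (√t + r + 1)^{−m}. -/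
set_option maxHeartbeats 1000000

noncomputable section

/-- `Φ(u) = sup_{w ∈ ℝ} (uw − w² cosh w)`. -/
def Phi (u : ℝ) : ℝ := ⨆ w : ℝ, (u * w - w ^ 2 * Real.cosh w)

lemma phi_bddAbove (u : ℝ) :
    BddAbove (Set.range fun w : ℝ => u * w - w ^ 2 * Real.cosh w) := by
  refine ⟨u ^ 2 / 4, ?_⟩
  rintro x ⟨w, rfl⟩
  have h1 : 1 ≤ Real.cosh w := Real.one_le_cosh w
  nlinarith [sq_nonneg (w - u / 2), sq_nonneg w]

lemma Phi_lower (u : ℝ) (hu : 0 ≤ u) : u ^ 2 / (8 * (1 + u)) ≤ Phi u := by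
  have h1u : (0:ℝ) < 1 + u := by linarith
  have hle := le_ciSup (phi_bddAbove u) (u / (4 * (1 + u)))
  unfold Phi
  refine le_trans ?_ hle
  set w := u / (4 * (1 + u)) with hw
  have hw0 : 0 ≤ w := by positivity
  have hw1 : w ≤ 1 / 4 := by
    rw [hw, div_le_div_iff₀ (by linarith) (by norm_num)]
    linarith
  have hcosh : Real.cosh w ≤ 2 := by
    rw [Real.cosh_eq]
    have h2 : Real.exp w ≤ Real.exp (1/4) := Real.exp_le_exp.mpr hw1
    have h3 : Real.exp (1/4) < 2 := by
      rw [show (2:ℝ) = Real.exp (Real.log 2) by rw [Real.exp_log]; norm_num]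
      exact Real.exp_lt_exp.mpr (by nlinarith [Real.log_two_gt_d9])
    have h4 : Real.exp (-w) ≤ 1 := by
      rw [show (1:ℝ) = Real.exp 0 by rw [Real.exp_zero]]
      exact Real.exp_le_exp.mpr (by linarith)
    linarith
  have e1 : u * w = u ^ 2 / (4 * (1 + u)) := by
    rw [hw]; field_simp
  have e2 : w ^ 2 * 2 = u ^ 2 / (8 * (1 + u) ^ 2) := by
    rw [hw]; field_simp; ring
  have h5 : w ^ 2 * Real.cosh w ≤ u ^ 2 / (8 * (1 + u) ^ 2) := by
    rw [← e2]
    exact mul_le_mul_of_nonneg_left hcosh (sq_nonneg w)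
  have h6 : u ^ 2 / (8 * (1 + u) ^ 2) ≤ u ^ 2 / (8 * (1 + u)) := by
    apply div_le_div_of_nonneg_left (sq_nonneg u) (by positivity)
    nlinarith
  have e3 : u ^ 2 / (4 * (1 + u)) = 2 * (u ^ 2 / (8 * (1 + u))) := by
    field_simp; ring
  linarith

lemma aux_poly (m K : ℝ) (hm : 0 < m) (hK : 0 < K) :
    ∃ B : ℝ, 0 ≤ B ∧ ∀ y : ℝ, 0 ≤ y →
      2 * m * y * (1 + y) ^ 2 ≤ B * (1 + y) ^ 2 + K * y ^ 4 := by
  refine ⟨2 * m * (1 + 8 * m / K), by positivity, fun y hy => ?_⟩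
  rcases le_or_gt y (1 + 8 * m / K) with h | h
  · have h1 : 2 * m * y ≤ 2 * m * (1 + 8 * m / K) :=
      mul_le_mul_of_nonneg_left h (by linarith)
    nlinarith [sq_nonneg (1 + y), mul_nonneg hK.le (pow_nonneg hy 4)]
  · have h0 : (0:ℝ) ≤ 8 * m / K := by positivity
    have hy1 : 1 ≤ y := by linarith
    have h2 : 8 * m < y * K := (div_lt_iff₀ hK).mp (by linarith)
    have hA1 : (1 + y) ^ 2 ≤ 4 * y ^ 2 := by nlinarith
    have hA2 : 2 * m * y * (1 + y) ^ 2 ≤ 2 * m * y * (4 * y ^ 2) :=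
      mul_le_mul_of_nonneg_left hA1 (by positivity)
    have hA3 : 8 * m * y ^ 3 ≤ K * y ^ 4 := by
      nlinarith [mul_nonneg (by linarith : (0:ℝ) ≤ y * K - 8 * m) (pow_nonneg hy 3)]
    nlinarith [mul_nonneg (by positivity : (0:ℝ) ≤ 2 * m * (1 + 8 * m / K)) (sq_nonneg (1 + y))]

/-- For every `m > 0` and `c₁, c₂ > 0` there is a constant `C` such that for all `t ≥ 2` and
`r ≥ 0`, `(√t+1)^{−m} exp(−c₁ t (log t)^{−2} Φ(r log t / (c₂² t))) ≤ C (√t + r + 1)^{−m}`. -/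
theorem Phi_tail_absorption (m c₁ c₂ : ℝ) (hm : 0 < m) (hc₁ : 0 < c₁) (hc₂ : 0 < c₂) :
    ∃ C : ℝ, 0 < C ∧ ∀ t r : ℝ, 2 ≤ t → 0 ≤ r →
      (Real.sqrt t + 1) ^ (-m) *
          Real.exp (-(c₁ * t / (Real.log t) ^ 2 * Phi (r * Real.log t / (c₂ ^ 2 * t)))) ≤
        C * (Real.sqrt t + r + 1) ^ (-m) := by
  have hc2sq : 0 < c₂ ^ 2 := pow_pos hc₂ 2
  set K : ℝ := c₁ / (8 * c₂ ^ 2 * (c₂ ^ 2 + 2)) with hKdef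
  have hK : 0 < K := by positivity
  obtain ⟨B, hB0, hB⟩ := aux_poly m K hm hK
  refine ⟨Real.exp B, Real.exp_pos _, fun t r ht hr => ?_⟩
  have ht0 : (0:ℝ) < t := by linarith
  set s := Real.sqrt t with hs
  set L := Real.log t with hLdef
  have hs0 : 0 ≤ s := Real.sqrt_nonneg t
  have hs2 : s ^ 2 = t := Real.sq_sqrt ht0.le
  have hs1 : 1 ≤ s := by nlinarith
  have hL0 : 0 < L := Real.log_pos (by linarith)
  have hL2 : L ≤ 2 * s := by
    have h := Real.log_le_sub_one_of_pos (show (0:ℝ) < s by linarith)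
    have e : Real.log s = L / 2 := by rw [hLdef, hs, Real.log_sqrt ht0.le]
    rw [e] at h
    linarith
  set u := r * L / (c₂ ^ 2 * t) with hu_def
  have hu : 0 ≤ u := by positivity
  have hΦ := Phi_lower u hu
  set A := c₁ * t / L ^ 2 with hA_def
  have hA : 0 < A := by positivity
  have hS : (0:ℝ) < s + 1 := by linarith
  have hR : (0:ℝ) < s + r + 1 := by linarith
  set x := r / (s + 1) with hx_def
  have hx : 0 ≤ x := by positivity
  set y := Real.sqrt x with hy_def
  have hy : 0 ≤ y := Real.sqrt_nonneg x
  have hy2 : y ^ 2 = x := Real.sq_sqrt hx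
  have hlog1 : Real.log (s + r + 1) - Real.log (s + 1) = Real.log (1 + x) := by
    rw [← Real.log_div hR.ne' hS.ne']
    congr 1
    rw [hx_def]
    field_simp
    ring
  have hlog2 : Real.log (1 + x) ≤ 2 * y := by
    have h1 : (1:ℝ) + x ≤ (1 + y) ^ 2 := by nlinarith
    have h2 : Real.log (1 + x) ≤ Real.log ((1 + y) ^ 2) :=
      Real.log_le_log (by linarith) h1
    have h3 := Real.log_le_sub_one_of_pos (show (0:ℝ) < 1 + y by linarith)
    calc Real.log (1 + x) ≤ Real.log ((1 + y) ^ 2) := h2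
      _ = 2 * Real.log (1 + y) := by rw [Real.log_pow]; push_cast; ring
      _ ≤ 2 * y := by linarith
  have hpoly : 2 * m * y ≤ B + K * y ^ 4 / (1 + y) ^ 2 := by
    have hyp : (0:ℝ) < (1 + y) ^ 2 := by positivity
    rw [show B + K * y ^ 4 / (1 + y) ^ 2 = (B * (1 + y) ^ 2 + K * y ^ 4) / (1 + y) ^ 2 by
      field_simp, le_div_iff₀ hyp]
    nlinarith [hB y hy]
  have hmono : K * y ^ 4 / (1 + y) ^ 2 ≤ K * (x ^ 2 / (1 + x)) := by
    have e : y ^ 4 = x ^ 2 := by rw [← hy2]; ring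
    rw [show K * y ^ 4 / (1 + y) ^ 2 = K * (x ^ 2 / (1 + y) ^ 2) by rw [e]; ring]
    apply mul_le_mul_of_nonneg_left _ hK.le
    apply div_le_div_of_nonneg_left (sq_nonneg x) (by positivity)
    nlinarith
  have hdenpos : 0 < c₂ ^ 2 * t + r * L := by positivity
  have eD : A * (u ^ 2 / (8 * (1 + u))) = c₁ * r ^ 2 / (8 * c₂ ^ 2 * (c₂ ^ 2 * t + r * L)) := by
    rw [hA_def, hu_def]
    field_simp
  have hden : c₂ ^ 2 * t + r * L ≤ (c₂ ^ 2 + 2) * ((s + 1) * (s + 1 + r)) := by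
    nlinarith [mul_le_mul_of_nonneg_left hL2 hr, hs2, hs1, hr, hc2sq, mul_nonneg hr hs0]
  have eL : K * (x ^ 2 / (1 + x)) =
      c₁ * r ^ 2 / (8 * c₂ ^ 2 * ((c₂ ^ 2 + 2) * ((s + 1) * (s + 1 + r)))) := by
    rw [hKdef, hx_def]
    field_simp
  have hPhiLB : K * (x ^ 2 / (1 + x)) ≤ A * Phi u := by
    have h1 : K * (x ^ 2 / (1 + x)) ≤ A * (u ^ 2 / (8 * (1 + u))) := by
      rw [eL, eD]
      apply div_le_div_of_nonneg_left (by positivity) (by positivity)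
      nlinarith [hden, hc2sq]
    exact le_trans h1 (mul_le_mul_of_nonneg_left hΦ hA.le)
  rw [Real.rpow_def_of_pos hS, Real.rpow_def_of_pos hR, ← Real.exp_add, ← Real.exp_add,
    Real.exp_le_exp]
  have final : m * (Real.log (s + r + 1) - Real.log (s + 1)) ≤ B + A * Phi u := by
    calc m * (Real.log (s + r + 1) - Real.log (s + 1)) = m * Real.log (1 + x) := by rw [hlog1]
      _ ≤ m * (2 * y) := mul_le_mul_of_nonneg_left hlog2 hm.le
      _ = 2 * m * y := by ring
      _ ≤ B + K * y ^ 4 / (1 + y) ^ 2 := hpoly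
      _ ≤ B + K * (x ^ 2 / (1 + x)) := by linarith
      _ ≤ B + A * Phi u := by linarith
  linarith

end
end
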